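/- Let G = (V, E) be a finite directed graph with no self-loops, let Q ∈ ℕ, let Δ ∈ ℝ, and let F_v, G_{uv}, H_v : ℝ → ℝ be convex functions (v ∈ V, (u,v) ∈ E), with J(x) = Σ_{v∈V} F_v(x_v) + Σ_{(u,v)∈E} G_{uv}(x_u − x_v) and H(x) = Σ_{v∈V} H_v(x_v) for x ∈ ℤ^V. Suppose x⁰ ∈ ℤ^V is such that for every v, x⁰_v ∈ {0,…,Q} minimizes H_v over {0,…,Q}, and suppose x* is a global minimizer of J over the feasible set {x ∈ ℤ^V : 0 ≤ x_v ≤ Q for all v, H(x) ≤ Δ} (assumed nonempty). Then there exist N ∈ ℕ, subsets S_1,…,S_N ⊆ V each inducing a connected subgraph, signs ε_1,…,ε_N ∈ {+1, −1}, and positive integers α_1,…,α_N such that the iterates x^k = x⁰ + Σ_{j=1}^{k} α_j ε_j χ_{S_j} satisfy: J(x^k) ≤ J(x^{k−1}) for k = 1,…,N; each x^k is feasible (0 ≤ x^k_v ≤ Q for all v and H(x^k) ≤ Δ) for k = 0,…,N; and x^N = x*. -/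

import Mathlib

open scoped Classical

/-- The undirected support graph of the directed edge set `E`. -/
def undirGraph {V : Type*} (E : Finset (V × V)) : SimpleGraph V where
  Adj u v := u ≠ v ∧ ((u, v) ∈ E ∨ (v, u) ∈ E)
  symm := by
    constructor
    intro u v h
    exact ⟨h.1.symm, h.2.elim Or.inr Or.inl⟩
  loopless := by constructor; intro u h; exact h.1 rfl

/-- `S ⊆ V` induces a connected subgraph of the (undirected version of the) graph. -/
def InducesConnected {V : Type*} (E : Finset (V × V)) (S : Set V) : Prop :=
  S.Nonempty ∧ ((undirGraph E).induce S).Connected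

/-- Integer indicator vector of a set of vertices. -/
noncomputable def chiV {V : Type*} (S : Set V) : V → ℤ :=
  S.indicator 1

/-- Integer indicator vector of a set of edges. -/
noncomputable def chiE {V : Type*} {E : Finset (V × V)}
    (T : Set {e : V × V // e ∈ E}) : {e : V × V // e ∈ E} → ℤ :=
  T.indicator 1

/-- Outgoing edges of `S`. -/
def deltaPlus {V : Type*} (E : Finset (V × V)) (S : Set V) :
    Set {e : V × V // e ∈ E} :=
  {e | (e : V × V).1 ∈ S ∧ (e : V × V).2 ∉ S}

/-- Incoming edges of `S`. -/
def deltaMinus {V : Type*} (E : Finset (V × V)) (S : Set V) :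
    Set {e : V × V // e ∈ E} :=
  {e | (e : V × V).1 ∉ S ∧ (e : V × V).2 ∈ S}

/-- The conformal (sign-compatible, coordinatewise) partial order `x ⊑ y`. -/
def Sqle {ι : Type*} (x y : ι → ℤ) : Prop :=
  ∀ i, 0 ≤ x i * y i ∧ |x i| ≤ |y i|

/-- `(x, a)` lies in the integer kernel of `A_TV`. -/
def InKerATV {V : Type*} (E : Finset (V × V)) (x : V → ℤ)
    (a : {e : V × V // e ∈ E} → ℤ) : Prop :=
  ∀ e : {e : V × V // e ∈ E}, x (e : V × V).1 - x (e : V × V).2 = a e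

/-- `(x, a)` is a Graver basis element of `A_TV`: a `⊑`-minimal nonzero
element of the integer kernel. -/
def InGraverATV {V : Type*} (E : Finset (V × V)) (x : V → ℤ)
    (a : {e : V × V // e ∈ E} → ℤ) : Prop :=
  InKerATV E x a ∧ ¬(x = 0 ∧ a = 0) ∧
    ∀ (x' : V → ℤ) (a' : {e : V × V // e ∈ E} → ℤ),
      InKerATV E x' a' → ¬(x' = 0 ∧ a' = 0) → Sqle x' x → Sqle a' a →
        x' = x ∧ a' = a

/-- The objective `J(x) = Σ_v F_v(x_v) + Σ_{(u,v)∈E} G_{uv}(x_u − x_v)`. -/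
noncomputable def JObj {V : Type*} [Fintype V] (E : Finset (V × V))
    (F : V → ℝ → ℝ) (Gf : V × V → ℝ → ℝ) (x : V → ℤ) : ℝ :=
  (∑ v, F v (x v : ℝ)) + ∑ e ∈ E, Gf e ((x e.1 : ℝ) - (x e.2 : ℝ))

/-- The budget `H(x) = Σ_v H_v(x_v)`. -/
noncomputable def HObj {V : Type*} [Fintype V] (Hf : V → ℝ → ℝ) (x : V → ℤ) : ℝ :=
  ∑ v, Hf v (x v : ℝ)

namespace GraverAux

variable {V : Type*}

/-- the move vector of a pair (set, sign) -/
noncomputable def gvec (p : Set V × ℤ) : V → ℤ := fun v => p.2 * chiV p.1 v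

lemma gvec_cases (p : Set V × ℤ) (v : V) :
    (v ∈ p.1 ∧ gvec p v = p.2) ∨ (v ∉ p.1 ∧ gvec p v = 0) := by
  by_cases h : v ∈ p.1
  · exact Or.inl ⟨h, by simp [gvec, chiV, Set.indicator_apply, h]⟩
  · exact Or.inr ⟨h, by simp [gvec, chiV, Set.indicator_apply, h]⟩

/-! ### One-dimensional convexity lemmas -/

lemma shift_mono {f : ℝ → ℝ} (hf : ConvexOn ℝ Set.univ f) {a b c : ℝ}
    (hab : a ≤ b) (hc : 0 ≤ c) : f (a + c) - f a ≤ f (b + c) - f b := by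
  rcases eq_or_lt_of_le hc with rfl | hc
  · simp
  rcases eq_or_lt_of_le hab with rfl | hab
  · exact le_refl _
  have hD : 0 < b + c - a := by linarith
  have s1 := hf.secant_mono (a := a) (x := a + c) (y := b + c)
    (Set.mem_univ _) (Set.mem_univ _) (Set.mem_univ _)
    (ne_of_gt (by linarith)) (ne_of_gt (by linarith)) (by linarith)
  have s2 := hf.secant_mono (a := b + c) (x := a) (y := b)
    (Set.mem_univ _) (Set.mem_univ _) (Set.mem_univ _)
    (ne_of_lt (by linarith)) (ne_of_lt (by linarith)) hab.le
  have e1 : a + c - a = c := by ring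
  rw [e1] at s1
  have h2 : (f a - f (b + c)) / (a - (b + c)) = (f (b + c) - f a) / (b + c - a) := by
    rw [div_eq_div_iff (by linarith) (by linarith)]; ring
  have h3 : (f b - f (b + c)) / (b - (b + c)) = (f (b + c) - f b) / c := by
    rw [div_eq_div_iff (by linarith) (by linarith)]; ring
  rw [h2, h3] at s2
  have hchain : (f (a + c) - f a) / c ≤ (f (b + c) - f b) / c := le_trans s1 s2
  rw [div_le_div_iff₀ hc hc] at hchain
  nlinarith [hchain]

lemma shift_anti {f : ℝ → ℝ} (hf : ConvexOn ℝ Set.univ f) {a b c : ℝ}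
    (hab : a ≤ b) (hc : c ≤ 0) : f (b + c) - f b ≤ f (a + c) - f a := by
  have h := shift_mono hf (a := a + c) (b := b + c) (c := -c)
    (by linarith) (by linarith)
  have e1 : a + c + -c = a := by ring
  have e2 : b + c + -c = b := by ring
  rw [e1, e2] at h
  linarith

/-! ### List lemmas -/

lemma list_sum_nonneg {l : List ℤ} (h : ∀ x ∈ l, 0 ≤ x) : 0 ≤ l.sum := by
  induction l with
  | nil => simp
  | cons a t ih =>
    simp only [List.sum_cons]
    have := h a List.mem_cons_self
    have := ih (fun x hx => h x (List.mem_cons_of_mem _ hx))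
    omega

lemma list_sum_nonpos {l : List ℤ} (h : ∀ x ∈ l, x ≤ 0) : l.sum ≤ 0 := by
  induction l with
  | nil => simp
  | cons a t ih =>
    simp only [List.sum_cons]
    have := h a List.mem_cons_self
    have := ih (fun x hx => h x (List.mem_cons_of_mem _ hx))
    omega

lemma single_le_sum' {l : List ℤ} (h : ∀ x ∈ l, 0 ≤ x) {x : ℤ} (hx : x ∈ l) :
    x ≤ l.sum := by
  induction l with
  | nil => simp at hx
  | cons a t ih =>
    simp only [List.sum_cons]
    rcases List.mem_cons.mp hx with rfl | hx'
    · have := list_sum_nonneg (fun y hy => h y (List.mem_cons_of_mem _ hy))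
      omega
    · have h1 := h a List.mem_cons_self
      have := ih (fun y hy => h y (List.mem_cons_of_mem _ hy)) hx'
      omega

lemma sum_le_single' {l : List ℤ} (h : ∀ x ∈ l, x ≤ 0) {x : ℤ} (hx : x ∈ l) :
    l.sum ≤ x := by
  induction l with
  | nil => simp at hx
  | cons a t ih =>
    simp only [List.sum_cons]
    rcases List.mem_cons.mp hx with rfl | hx'
    · have := list_sum_nonpos (fun y hy => h y (List.mem_cons_of_mem _ hy))
      omega
    · have h1 := h a List.mem_cons_self
      have := ih (fun y hy => h y (List.mem_cons_of_mem _ hy)) hx'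
      omega

/-- Sign transfer: after removing a conformal element from a conformal
decomposition, the remaining elements are conformal to the new difference. -/
lemma sign_transfer {M : List ℤ} {t d : ℤ}
    (hsum : t + M.sum = d)
    (ht : (0 ≤ d → 0 ≤ t) ∧ (d ≤ 0 → t ≤ 0))
    (hM : ∀ a ∈ M, (0 ≤ d → 0 ≤ a) ∧ (d ≤ 0 → a ≤ 0)) :
    ∀ a ∈ M, (0 ≤ d - t → 0 ≤ a) ∧ (d - t ≤ 0 → a ≤ 0) := by
  intro a ha
  have hdm : M.sum = d - t := by omega
  rcases le_or_gt 0 d with hd | hd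
  · refine ⟨fun _ => (hM a ha).1 hd, fun h2 => ?_⟩
    have h3 : a ≤ M.sum := single_le_sum' (fun x hx => (hM x hx).1 hd) ha
    omega
  · refine ⟨fun h1 => ?_, fun _ => (hM a ha).2 hd.le⟩
    have h3 : M.sum ≤ a := sum_le_single' (fun x hx => (hM x hx).2 hd.le) ha
    omega

/-! ### One-dimensional superadditivity -/

lemma list_super_nonneg (f : ℝ → ℝ) (hf : ConvexOn ℝ Set.univ f) (s : ℤ) :
    ∀ (M : List ℤ), (∀ a ∈ M, 0 ≤ a) →
      (M.map (fun a => f ((s + a : ℤ) : ℝ) - f ((s : ℤ) : ℝ))).sum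
        ≤ f ((s + M.sum : ℤ) : ℝ) - f ((s : ℤ) : ℝ) := by
  intro M
  induction M with
  | nil => intro _; simp
  | cons a t ih =>
    intro h
    have ht : ∀ b ∈ t, 0 ≤ b := fun b hb => h b (List.mem_cons_of_mem _ hb)
    have ha : 0 ≤ a := h a List.mem_cons_self
    have hts : 0 ≤ t.sum := list_sum_nonneg ht
    have ih' := ih ht
    have key := shift_mono hf (a := ((s : ℤ) : ℝ)) (b := ((s + t.sum : ℤ) : ℝ))
      (c := ((a : ℤ) : ℝ)) (Int.cast_le.mpr (by omega)) (by exact_mod_cast ha)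
    have e1 : ((s + (a + t.sum) : ℤ) : ℝ) = ((s + t.sum : ℤ) : ℝ) + (a : ℝ) := by
      push_cast; ring
    have e2 : ((s + a : ℤ) : ℝ) = ((s : ℤ) : ℝ) + (a : ℝ) := by push_cast; ring
    rw [← e2, ← e1] at key
    simp only [List.map_cons, List.sum_cons]
    linarith [key, ih']

lemma list_super_nonpos (f : ℝ → ℝ) (hf : ConvexOn ℝ Set.univ f) (s : ℤ) :
    ∀ (M : List ℤ), (∀ a ∈ M, a ≤ 0) →
      (M.map (fun a => f ((s + a : ℤ) : ℝ) - f ((s : ℤ) : ℝ))).sum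
        ≤ f ((s + M.sum : ℤ) : ℝ) - f ((s : ℤ) : ℝ) := by
  intro M
  induction M with
  | nil => intro _; simp
  | cons a t ih =>
    intro h
    have ht : ∀ b ∈ t, b ≤ 0 := fun b hb => h b (List.mem_cons_of_mem _ hb)
    have ha : a ≤ 0 := h a List.mem_cons_self
    have hts : t.sum ≤ 0 := list_sum_nonpos ht
    have ih' := ih ht
    have key := shift_anti hf (a := ((s + t.sum : ℤ) : ℝ)) (b := ((s : ℤ) : ℝ))
      (c := ((a : ℤ) : ℝ)) (Int.cast_le.mpr (by omega)) (by exact_mod_cast ha)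
    have e1 : ((s + (a + t.sum) : ℤ) : ℝ) = ((s + t.sum : ℤ) : ℝ) + (a : ℝ) := by
      push_cast; ring
    have e2 : ((s + a : ℤ) : ℝ) = ((s : ℤ) : ℝ) + (a : ℝ) := by push_cast; ring
    rw [← e2, ← e1] at key
    simp only [List.map_cons, List.sum_cons]
    linarith [key, ih']

lemma list_super (f : ℝ → ℝ) (hf : ConvexOn ℝ Set.univ f) (s : ℤ) (M : List ℤ)
    (h : ∀ a ∈ M, (0 ≤ M.sum → 0 ≤ a) ∧ (M.sum ≤ 0 → a ≤ 0)) :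
    (M.map (fun a => f ((s + a : ℤ) : ℝ) - f ((s : ℤ) : ℝ))).sum
      ≤ f ((s + M.sum : ℤ) : ℝ) - f ((s : ℤ) : ℝ) := by
  rcases le_total 0 M.sum with h1 | h1
  · exact list_super_nonneg f hf s M (fun a ha => (h a ha).1 h1)
  · exact list_super_nonpos f hf s M (fun a ha => (h a ha).2 h1)


/-! ### List/Finset sum plumbing -/

lemma map_sum_add {α : Type*} (L : List α) (A B : α → ℝ) :
    (L.map (fun p => A p + B p)).sum = (L.map A).sum + (L.map B).sum := by
  induction L with
  | nil => simp
  | cons a t ih => simp [ih]; ring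

lemma map_sub_sum_int {α : Type*} (L : List α) (A B : α → ℤ) :
    (L.map (fun p => A p - B p)).sum = (L.map A).sum - (L.map B).sum := by
  induction L with
  | nil => simp
  | cons a t ih => simp [ih]; ring

lemma list_finset_swap {α β : Type*} (L : List α) (s : Finset β) (h : α → β → ℝ) :
    (L.map (fun p => ∑ v ∈ s, h p v)).sum = ∑ v ∈ s, (L.map (fun p => h p v)).sum := by
  induction L with
  | nil => simp
  | cons a t ih => simp [ih, Finset.sum_add_distrib]

end GraverAux


namespace GraverAux

variable {V : Type*}

lemma jsuper [Fintype V] (E : Finset (V × V)) (F : V → ℝ → ℝ) (Gf : V × V → ℝ → ℝ)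
    (hF : ∀ v, ConvexOn ℝ Set.univ (F v)) (hG : ∀ e ∈ E, ConvexOn ℝ Set.univ (Gf e))
    (x d : V → ℤ) (L : List (Set V × ℤ))
    (hsum : ∀ v, (L.map (fun p => gvec p v)).sum = d v)
    (hcv : ∀ p ∈ L, ∀ v, (0 ≤ d v → 0 ≤ gvec p v) ∧ (d v ≤ 0 → gvec p v ≤ 0))
    (hce : ∀ p ∈ L, ∀ e ∈ E, (0 ≤ d e.1 - d e.2 → 0 ≤ gvec p e.1 - gvec p e.2) ∧
      (d e.1 - d e.2 ≤ 0 → gvec p e.1 - gvec p e.2 ≤ 0)) :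
    (L.map (fun p => JObj E F Gf (fun v => x v + gvec p v) - JObj E F Gf x)).sum
      ≤ JObj E F Gf (fun v => x v + d v) - JObj E F Gf x := by
  have hJ : ∀ g : V → ℤ,
      JObj E F Gf (fun v => x v + g v) - JObj E F Gf x
        = (∑ v, (F v ((x v + g v : ℤ) : ℝ) - F v ((x v : ℤ) : ℝ)))
          + ∑ e ∈ E, (Gf e ((((x e.1 - x e.2) + (g e.1 - g e.2) : ℤ)) : ℝ)
              - Gf e (((x e.1 - x e.2 : ℤ)) : ℝ)) := by
    intro g
    unfold JObj
    rw [Finset.sum_sub_distrib, Finset.sum_sub_distrib]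
    have e2 : ∀ e : V × V, (((x e.1 - x e.2) + (g e.1 - g e.2) : ℤ) : ℝ)
        = ((x e.1 + g e.1 : ℤ) : ℝ) - ((x e.2 + g e.2 : ℤ) : ℝ) := by
      intro e; push_cast; ring
    have e3 : ∀ e : V × V, ((x e.1 - x e.2 : ℤ) : ℝ)
        = ((x e.1 : ℤ) : ℝ) - ((x e.2 : ℤ) : ℝ) := by
      intro e; push_cast; ring
    simp only [e2, e3]
    ring
  simp only [hJ]
  rw [map_sum_add, list_finset_swap, list_finset_swap]
  have hv : ∀ v : V,
      (L.map (fun p => F v ((x v + gvec p v : ℤ) : ℝ) - F v ((x v : ℤ) : ℝ))).sum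
        ≤ F v ((x v + d v : ℤ) : ℝ) - F v ((x v : ℤ) : ℝ) := by
    intro v
    have := list_super (F v) (hF v) (x v) (L.map (fun p => gvec p v)) ?_
    · rw [List.map_map] at this
      rw [hsum v] at this
      exact this
    · intro a ha
      obtain ⟨p, hp, rfl⟩ := List.mem_map.mp ha
      rw [hsum v]
      exact hcv p hp v
  have hedge : ∀ e ∈ E,
      (L.map (fun p => Gf e ((((x e.1 - x e.2) + (gvec p e.1 - gvec p e.2) : ℤ)) : ℝ)
          - Gf e (((x e.1 - x e.2 : ℤ)) : ℝ))).sum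
        ≤ Gf e ((((x e.1 - x e.2) + (d e.1 - d e.2) : ℤ)) : ℝ)
            - Gf e (((x e.1 - x e.2 : ℤ)) : ℝ) := by
    intro e he
    have hms : (L.map (fun p => gvec p e.1 - gvec p e.2)).sum = d e.1 - d e.2 := by
      rw [map_sub_sum_int, hsum e.1, hsum e.2]
    have := list_super (Gf e) (hG e he) (x e.1 - x e.2)
      (L.map (fun p => gvec p e.1 - gvec p e.2)) ?_
    · rw [List.map_map] at this
      rw [hms] at this
      exact this
    · intro a ha
      obtain ⟨p, hp, rfl⟩ := List.mem_map.mp ha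
      rw [hms]
      exact hce p hp e he
  exact add_le_add (Finset.sum_le_sum (fun v _ => hv v))
    (Finset.sum_le_sum (fun e he => hedge e he))

end GraverAux


namespace GraverAux

variable {V : Type*}

lemma decomp [Fintype V] (E : Finset (V × V)) (hloop : ∀ e ∈ E, e.1 ≠ e.2) :
    ∀ (n : ℕ) (d : V → ℤ), (∑ v, (d v).natAbs) ≤ n →
    ∃ L : List (Set V × ℤ),
      (∀ p ∈ L, InducesConnected E p.1 ∧ (p.2 = 1 ∨ p.2 = -1)) ∧
      (∀ v, (L.map (fun p => gvec p v)).sum = d v) ∧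
      (∀ p ∈ L, ∀ v, (0 ≤ d v → 0 ≤ gvec p v) ∧ (d v ≤ 0 → gvec p v ≤ 0)) ∧
      (∀ p ∈ L, ∀ e ∈ E, (0 ≤ d e.1 - d e.2 → 0 ≤ gvec p e.1 - gvec p e.2) ∧
        (d e.1 - d e.2 ≤ 0 → gvec p e.1 - gvec p e.2 ≤ 0)) := by
  intro n
  induction n with
  | zero =>
    intro d hd
    have h0 : ∀ v, d v = 0 := by
      intro v
      have h1 : ∑ v, (d v).natAbs = 0 := Nat.le_zero.mp hd
      have h2 := Finset.sum_eq_zero_iff.mp h1 v (Finset.mem_univ v)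
      omega
    exact ⟨[], by simp, fun v => by simp [h0 v], by simp, by simp⟩
  | succ n ih =>
    intro d hd
    by_cases h0 : ∀ v, d v = 0
    · exact ⟨[], by simp, fun v => by simp [h0 v], by simp, by simp⟩
    push_neg at h0
    obtain ⟨w, hw⟩ := h0
    set ε : ℤ := if 0 < d w then 1 else -1 with hε
    have hε2 : ε = 1 ∨ ε = -1 := by
      by_cases h : 0 < d w <;> simp [hε, h]
    set T : Set V := {v | 0 < ε * d v} with hT
    set r : V → V → Prop := fun a b => a ∈ T ∧ b ∈ T ∧ (undirGraph E).Adj a b with hr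
    set S : Set V := {v | Relation.ReflTransGen r w v} with hS
    have hwT : w ∈ T := by
      simp only [hT, Set.mem_setOf_eq]
      by_cases h : 0 < d w
      · simp only [hε, if_pos h]; omega
      · simp only [hε, if_neg h]; omega
    have hwS : w ∈ S := Relation.ReflTransGen.refl
    have hSsubT : ∀ v ∈ S, v ∈ T := by
      have key : ∀ v, Relation.ReflTransGen r w v → v ∈ T := by
        intro v hv
        induction hv with
        | refl => exact hwT
        | tail h₁ h₂ ih2 => exact h₂.2.1
      exact fun v hv => key v hv
    have hεd : ∀ v ∈ S, 1 ≤ ε * d v := by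
      intro v hv
      have := hSsubT v hv
      simp only [hT, Set.mem_setOf_eq] at this
      omega
    have hadjS : ∀ a b, a ∈ S → (undirGraph E).Adj a b → b ∈ T → b ∈ S := by
      intro a b ha hab hb
      exact Relation.ReflTransGen.tail ha ⟨hSsubT a ha, hb, hab⟩
    -- connectivity of S
    have hconn : InducesConnected E S := by
      refine ⟨⟨w, hwS⟩, ?_⟩
      have hreach : ∀ b, Relation.ReflTransGen r w b →
          ∀ hb : b ∈ S, ((undirGraph E).induce S).Reachable ⟨w, hwS⟩ ⟨b, hb⟩ := by
        intro b hb
        induction hb with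
        | refl => intro _; exact SimpleGraph.Reachable.refl _
        | @tail c b' h₁ h₂ ih2 =>
          intro hb'
          have hcS : c ∈ S := h₁
          have hadj : ((undirGraph E).induce S).Adj ⟨c, hcS⟩ ⟨b', hb'⟩ := h₂.2.2
          exact (ih2 hcS).trans hadj.reachable
      have hne : Nonempty ↥S := ⟨⟨w, hwS⟩⟩
      refine ⟨?_⟩
      rintro ⟨a, ha⟩ ⟨b, hb⟩
      exact (hreach a ha ha).symm.trans (hreach b hb hb)
    -- the head move and remaining difference
    set p₀ : Set V × ℤ := (S, ε) with hp₀
    set d' : V → ℤ := fun v => d v - gvec p₀ v with hd'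
    have hgv : ∀ v, (v ∈ S ∧ gvec p₀ v = ε) ∨ (v ∉ S ∧ gvec p₀ v = 0) := by
      intro v
      rcases gvec_cases p₀ v with h | h
      · exact Or.inl h
      · exact Or.inr h
    -- edge trichotomy for the head move
    have hedge : ∀ e ∈ E,
        (gvec p₀ e.1 - gvec p₀ e.2 = 0)
        ∨ (gvec p₀ e.1 - gvec p₀ e.2 = ε ∧ 1 ≤ ε * (d e.1 - d e.2))
        ∨ (gvec p₀ e.1 - gvec p₀ e.2 = -ε ∧ ε * (d e.1 - d e.2) ≤ -1) := by
      intro e he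
      have hadj : (undirGraph E).Adj e.1 e.2 := ⟨hloop e he, Or.inl (by simpa using he)⟩
      rcases hgv e.1 with ⟨h1S, h1⟩ | ⟨h1S, h1⟩ <;> rcases hgv e.2 with ⟨h2S, h2⟩ | ⟨h2S, h2⟩
      · exact Or.inl (by omega)
      · -- e.1 ∈ S, e.2 ∉ S
        have h2T : e.2 ∉ T := fun h => h2S (hadjS e.1 e.2 h1S hadj h)
        have h2d : ε * d e.2 ≤ 0 := by
          simp only [hT, Set.mem_setOf_eq] at h2T; omega
        have h1d := hεd e.1 h1S
        refine Or.inr (Or.inl ⟨by omega, by nlinarith [h1d, h2d]⟩)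
      · -- e.2 ∈ S, e.1 ∉ S
        have h1T : e.1 ∉ T := fun h => h1S (hadjS e.2 e.1 h2S hadj.symm h)
        have h1d : ε * d e.1 ≤ 0 := by
          simp only [hT, Set.mem_setOf_eq] at h1T; omega
        have h2d := hεd e.2 h2S
        refine Or.inr (Or.inr ⟨by omega, by nlinarith [h1d, h2d]⟩)
      · exact Or.inl (by omega)
    -- measure decrease
    have hmeas : ∑ v, (d' v).natAbs ≤ n := by
      have hlt : ∑ v, (d' v).natAbs < ∑ v, (d v).natAbs := by
        apply Finset.sum_lt_sum
        · intro v _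
          rcases hgv v with ⟨hvS, hv⟩ | ⟨hvS, hv⟩
          · have := hεd v hvS
            simp only [hd', hv]
            rcases hε2 with h | h <;> rw [h] at this ⊢ <;> omega
          · simp [hd', hv]
        · refine ⟨w, Finset.mem_univ w, ?_⟩
          rcases hgv w with ⟨hvS, hv⟩ | ⟨hvS, hv⟩
          · have := hεd w hvS
            simp only [hd', hv]
            rcases hε2 with h | h <;> rw [h] at this ⊢ <;> omega
          · exact absurd hwS hvS
      omega
    obtain ⟨L', hA', hsum', hcv', hce'⟩ := ih d' hmeas
    -- lifting: conformality w.r.t. d' implies conformality w.r.t. d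
    have hlift : ∀ v, (0 ≤ d v → 0 ≤ d' v) ∧ (d v ≤ 0 → d' v ≤ 0) := by
      intro v
      rcases hgv v with ⟨hvS, hv⟩ | ⟨hvS, hv⟩
      · have := hεd v hvS
        simp only [hd', hv]
        rcases hε2 with h | h <;> rw [h] at this ⊢ <;> constructor <;> intro <;> omega
      · simp [hd', hv]
    have hliftE : ∀ e ∈ E, (0 ≤ d e.1 - d e.2 → 0 ≤ d' e.1 - d' e.2) ∧
        (d e.1 - d e.2 ≤ 0 → d' e.1 - d' e.2 ≤ 0) := by
      intro e he
      have hDd : d' e.1 - d' e.2 = (d e.1 - d e.2) - (gvec p₀ e.1 - gvec p₀ e.2) := by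
        simp only [hd']; ring
      rcases hedge e he with h | ⟨h, hs⟩ | ⟨h, hs⟩
      · rw [hDd, h]; omega
      · rw [hDd, h]
        rcases hε2 with hh | hh <;> rw [hh] at hs ⊢ <;> constructor <;> intro <;> omega
      · rw [hDd, h]
        rcases hε2 with hh | hh <;> rw [hh] at hs ⊢ <;> constructor <;> intro <;> omega
    refine ⟨p₀ :: L', ?_, ?_, ?_, ?_⟩
    · intro p hp
      rcases List.mem_cons.mp hp with rfl | hp'
      · exact ⟨hconn, hε2⟩
      · exact hA' p hp'
    · intro v
      simp only [List.map_cons, List.sum_cons, hsum' v, hd']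
      ring
    · intro p hp v
      rcases List.mem_cons.mp hp with rfl | hp'
      · rcases hgv v with ⟨hvS, hv⟩ | ⟨hvS, hv⟩
        · have := hεd v hvS
          rw [hv]
          rcases hε2 with h | h <;> rw [h] at this ⊢ <;> constructor <;> intro <;> omega
        · rw [hv]; omega
      · have h1 := hcv' p hp' v
        have h2 := hlift v
        exact ⟨fun h => h1.1 (h2.1 h), fun h => h1.2 (h2.2 h)⟩
    · intro p hp e he
      rcases List.mem_cons.mp hp with rfl | hp'
      · rcases hedge e he with h | ⟨h, hs⟩ | ⟨h, hs⟩
        · rw [h]; omega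
        · rw [h]
          rcases hε2 with hh | hh <;> rw [hh] at hs ⊢ <;> constructor <;> intro <;> omega
        · rw [h]
          rcases hε2 with hh | hh <;> rw [hh] at hs ⊢ <;> constructor <;> intro <;> omega
      · have h1 := hce' p hp' e he
        have h2 := hliftE e he
        exact ⟨fun h => h1.1 (h2.1 h), fun h => h1.2 (h2.2 h)⟩

end GraverAux

/-- Starting from a coordinatewise budget-minimal point, there
is a sequence of positive multiples of connected-subgraph (Graver) moves whose
iterates stay feasible, have non-increasing objective, and end at the global
optimum `x*`. -/
theorem exists_feasible_graver_augmentation_path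
    {V : Type*} [Fintype V] [DecidableEq V] (E : Finset (V × V))
    (hloop : ∀ e ∈ E, e.1 ≠ e.2) (Q : ℕ) (Δ : ℝ)
    (F : V → ℝ → ℝ) (Gf : V × V → ℝ → ℝ) (Hf : V → ℝ → ℝ)
    (hF : ∀ v, ConvexOn ℝ Set.univ (F v))
    (hG : ∀ e ∈ E, ConvexOn ℝ Set.univ (Gf e))
    (hH : ∀ v, ConvexOn ℝ Set.univ (Hf v))
    (x0 : V → ℤ)
    (hx0box : ∀ v, 0 ≤ x0 v ∧ x0 v ≤ (Q : ℤ))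
    (hx0min : ∀ (v : V) (q : ℤ), 0 ≤ q → q ≤ (Q : ℤ) →
      Hf v (x0 v : ℝ) ≤ Hf v (q : ℝ))
    (xstar : V → ℤ)
    (hstarfeas : (∀ v, 0 ≤ xstar v ∧ xstar v ≤ (Q : ℤ)) ∧ HObj Hf xstar ≤ Δ)
    (hstarmin : ∀ y : V → ℤ,
      ((∀ v, 0 ≤ y v ∧ y v ≤ (Q : ℤ)) ∧ HObj Hf y ≤ Δ) →
      JObj E F Gf xstar ≤ JObj E F Gf y) :
    ∃ (N : ℕ) (S : Fin N → Set V) (ε α : Fin N → ℤ) (xs : Fin (N + 1) → V → ℤ),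
      xs 0 = x0 ∧ xs (Fin.last N) = xstar ∧
      (∀ j, InducesConnected E (S j)) ∧
      (∀ j, ε j = 1 ∨ ε j = -1) ∧
      (∀ j, 0 < α j) ∧
      (∀ j : Fin N, xs j.succ = xs j.castSucc + (α j * ε j) • chiV (S j)) ∧
      (∀ j : Fin N, JObj E F Gf (xs j.succ) ≤ JObj E F Gf (xs j.castSucc)) ∧
      (∀ k : Fin (N + 1),
        (∀ v, 0 ≤ xs k v ∧ xs k v ≤ (Q : ℤ)) ∧ HObj Hf (xs k) ≤ Δ) := by
  classical
  -- Feasibility of any point coordinatewise between `x0` and `xstar`.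
  have hfeas : ∀ x : V → ℤ,
      (∀ v, (x0 v ≤ x v ∨ xstar v ≤ x v) ∧ (x v ≤ x0 v ∨ x v ≤ xstar v)) →
      (∀ v, 0 ≤ x v ∧ x v ≤ (Q : ℤ)) ∧ HObj Hf x ≤ Δ := by
    intro x hb
    constructor
    · intro v
      have h1 := hx0box v
      have h2 := hstarfeas.1 v
      have h3 := hb v
      omega
    · have hv : ∀ v, Hf v ((x v : ℤ) : ℝ) ≤ Hf v ((xstar v : ℤ) : ℝ) := by
        intro v
        have hint : (x0 v ≤ x v ∧ x v ≤ xstar v) ∨ (xstar v ≤ x v ∧ x v ≤ x0 v) := by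
          have := hb v; omega
        have hmem : ((x v : ℤ) : ℝ) ∈ segment ℝ ((x0 v : ℤ) : ℝ) ((xstar v : ℤ) : ℝ) := by
          rw [segment_eq_uIcc, Set.mem_uIcc]
          rcases hint with ⟨h1, h2⟩ | ⟨h1, h2⟩
          · exact Or.inl ⟨by exact_mod_cast h1, by exact_mod_cast h2⟩
          · exact Or.inr ⟨by exact_mod_cast h1, by exact_mod_cast h2⟩
        have hseg := (hH v).le_on_segment (Set.mem_univ _) (Set.mem_univ _) hmem
        have hmax : Hf v ((x0 v : ℤ) : ℝ) ≤ Hf v ((xstar v : ℤ) : ℝ) :=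
          hx0min v (xstar v) (hstarfeas.1 v).1 (hstarfeas.1 v).2
        calc Hf v ((x v : ℤ) : ℝ)
            ≤ max (Hf v ((x0 v : ℤ) : ℝ)) (Hf v ((xstar v : ℤ) : ℝ)) := hseg
          _ = Hf v ((xstar v : ℤ) : ℝ) := max_eq_right hmax
      calc HObj Hf x = ∑ v, Hf v ((x v : ℤ) : ℝ) := rfl
        _ ≤ ∑ v, Hf v ((xstar v : ℤ) : ℝ) := Finset.sum_le_sum (fun v _ => hv v)
        _ ≤ Δ := hstarfeas.2
  -- Main induction: build the augmentation path from any start `x` with a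
  -- conformal decomposition `L` of `xstar - x`.
  have build : ∀ (n : ℕ) (L : List (Set V × ℤ)) (x : V → ℤ), L.length = n →
      (∀ p ∈ L, InducesConnected E p.1 ∧ (p.2 = 1 ∨ p.2 = -1)) →
      (∀ v, x v + (L.map (fun p => GraverAux.gvec p v)).sum = xstar v) →
      (∀ p ∈ L, ∀ v, (0 ≤ xstar v - x v → 0 ≤ GraverAux.gvec p v) ∧
        (xstar v - x v ≤ 0 → GraverAux.gvec p v ≤ 0)) →
      (∀ p ∈ L, ∀ e ∈ E,
        (0 ≤ (xstar e.1 - x e.1) - (xstar e.2 - x e.2) →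
          0 ≤ GraverAux.gvec p e.1 - GraverAux.gvec p e.2) ∧
        ((xstar e.1 - x e.1) - (xstar e.2 - x e.2) ≤ 0 →
          GraverAux.gvec p e.1 - GraverAux.gvec p e.2 ≤ 0)) →
      (∀ v, (x0 v ≤ x v ∨ xstar v ≤ x v) ∧ (x v ≤ x0 v ∨ x v ≤ xstar v)) →
      ∃ (N : ℕ) (S : Fin N → Set V) (ε α : Fin N → ℤ) (xs : Fin (N + 1) → V → ℤ),
        xs 0 = x ∧ xs (Fin.last N) = xstar ∧
        (∀ j, InducesConnected E (S j)) ∧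
        (∀ j, ε j = 1 ∨ ε j = -1) ∧
        (∀ j, 0 < α j) ∧
        (∀ j : Fin N, xs j.succ = xs j.castSucc + (α j * ε j) • chiV (S j)) ∧
        (∀ j : Fin N, JObj E F Gf (xs j.succ) ≤ JObj E F Gf (xs j.castSucc)) ∧
        (∀ k : Fin (N + 1),
          (∀ v, 0 ≤ xs k v ∧ xs k v ≤ (Q : ℤ)) ∧ HObj Hf (xs k) ≤ Δ) := by
    intro n
    induction n with
    | zero =>
      intro L x hlen hA hsum hcv hce hbd
      have hL : L = [] := List.length_eq_zero_iff.mp hlen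
      subst hL
      have hx : x = xstar := by funext v; have := hsum v; simpa using this
      subst hx
      exact ⟨0, Fin.elim0, Fin.elim0, Fin.elim0, fun _ => x, rfl, rfl,
        fun j => j.elim0, fun j => j.elim0, fun j => j.elim0, fun j => j.elim0,
        fun j => j.elim0, fun _ => ⟨hstarfeas.1, hstarfeas.2⟩⟩
    | succ n ih =>
      intro L x hlen hA hsum hcv hce hbd
      have hxfeas := hfeas x hbd
      have hLne : L ≠ [] := by intro h; rw [h] at hlen; simp at hlen
      have hsum' : ∀ v, (L.map (fun p => GraverAux.gvec p v)).sum = xstar v - x v := by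
        intro v; have := hsum v; omega
      have hsuper := GraverAux.jsuper E F Gf hF hG x (fun v => xstar v - x v) L
        (fun v => hsum' v) (fun p hp v => hcv p hp v) (fun p hp e he => hce p hp e he)
      have hxd : (fun v => x v + (xstar v - x v)) = xstar := by funext v; ring
      rw [hxd] at hsuper
      have hJstar : JObj E F Gf xstar ≤ JObj E F Gf x := hstarmin x hxfeas
      have hex : ∃ p ∈ L,
          JObj E F Gf (fun v => x v + GraverAux.gvec p v) ≤ JObj E F Gf x := by
        by_contra hno
        push_neg at hno
        have hmapne : (L.map (fun p =>
            JObj E F Gf (fun v => x v + GraverAux.gvec p v) - JObj E F Gf x)) ≠ [] := by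
          cases L with
          | nil => exact absurd rfl hLne
          | cons a t => simp
        have hpos : 0 < (L.map (fun p =>
            JObj E F Gf (fun v => x v + GraverAux.gvec p v) - JObj E F Gf x)).sum := by
          apply List.sum_pos
          · intro y hy
            obtain ⟨p, hp, rfl⟩ := List.mem_map.mp hy
            have := hno p hp
            linarith
          · exact hmapne
        linarith
      obtain ⟨p, hp, hJp⟩ := hex
      set x' : V → ℤ := fun v => x v + GraverAux.gvec p v with hx'
      obtain ⟨l₁, l₂, hLeq⟩ := List.append_of_mem hp
      set L' := l₁ ++ l₂ with hL'
      have hperm : L.Perm (p :: L') := by rw [hLeq]; exact List.perm_middle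
      have hlen' : L'.length = n := by
        have h1 := hperm.length_eq
        simp only [List.length_cons] at h1
        omega
      have hsums : ∀ (f : (Set V × ℤ) → ℤ), (L.map f).sum = f p + (L'.map f).sum := by
        intro f
        rw [(hperm.map f).sum_eq]
        simp
      have hA'' : ∀ q ∈ L', InducesConnected E q.1 ∧ (q.2 = 1 ∨ q.2 = -1) :=
        fun q hq => hA q (hperm.mem_iff.mpr (List.mem_cons_of_mem _ hq))
      have hsum'' : ∀ v, x' v + (L'.map (fun q => GraverAux.gvec q v)).sum = xstar v := by
        intro v
        have h1 := hsum v
        rw [hsums (fun q => GraverAux.gvec q v)] at h1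
        have hxv : x' v = x v + GraverAux.gvec p v := rfl
        omega
      have hcv'' : ∀ q ∈ L', ∀ v,
          (0 ≤ xstar v - x' v → 0 ≤ GraverAux.gvec q v) ∧
          (xstar v - x' v ≤ 0 → GraverAux.gvec q v ≤ 0) := by
        intro q hq v
        have e1 : GraverAux.gvec p v + (L'.map (fun q => GraverAux.gvec q v)).sum
            = xstar v - x v := by
          have h1 := hsum' v
          rw [hsums (fun q => GraverAux.gvec q v)] at h1
          omega
        have htr := GraverAux.sign_transfer e1 (hcv p hp v)
          (fun a ha => by
            obtain ⟨q', hq', rfl⟩ := List.mem_map.mp ha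
            exact hcv q' (hperm.mem_iff.mpr (List.mem_cons_of_mem _ hq')) v)
          (GraverAux.gvec q v) (List.mem_map_of_mem (f := fun q => GraverAux.gvec q v) hq)
        have hxv : x' v = x v + GraverAux.gvec p v := rfl
        exact ⟨fun h => htr.1 (by omega), fun h => htr.2 (by omega)⟩
      have hce'' : ∀ q ∈ L', ∀ e ∈ E,
          (0 ≤ (xstar e.1 - x' e.1) - (xstar e.2 - x' e.2) →
            0 ≤ GraverAux.gvec q e.1 - GraverAux.gvec q e.2) ∧
          ((xstar e.1 - x' e.1) - (xstar e.2 - x' e.2) ≤ 0 →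
            GraverAux.gvec q e.1 - GraverAux.gvec q e.2 ≤ 0) := by
        intro q hq e he
        have e1 : (GraverAux.gvec p e.1 - GraverAux.gvec p e.2)
            + (L'.map (fun q => GraverAux.gvec q e.1 - GraverAux.gvec q e.2)).sum
            = (xstar e.1 - x e.1) - (xstar e.2 - x e.2) := by
          have h1 := hsum' e.1
          have h2 := hsum' e.2
          rw [hsums (fun q => GraverAux.gvec q e.1)] at h1
          rw [hsums (fun q => GraverAux.gvec q e.2)] at h2
          rw [GraverAux.map_sub_sum_int]
          omega
        have htr := GraverAux.sign_transfer e1 (hce p hp e he)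
          (fun a ha => by
            obtain ⟨q', hq', rfl⟩ := List.mem_map.mp ha
            exact hce q' (hperm.mem_iff.mpr (List.mem_cons_of_mem _ hq')) e he)
          (GraverAux.gvec q e.1 - GraverAux.gvec q e.2) (List.mem_map_of_mem (f := fun q => GraverAux.gvec q e.1 - GraverAux.gvec q e.2) hq)
        have hx1 : x' e.1 = x e.1 + GraverAux.gvec p e.1 := rfl
        have hx2 : x' e.2 = x e.2 + GraverAux.gvec p e.2 := rfl
        exact ⟨fun h => htr.1 (by omega), fun h => htr.2 (by omega)⟩
      have hbd'' : ∀ v, (x0 v ≤ x' v ∨ xstar v ≤ x' v) ∧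
          (x' v ≤ x0 v ∨ x' v ≤ xstar v) := by
        intro v
        have hxv : x' v = x v + GraverAux.gvec p v := rfl
        have hb := hbd v
        have hc := hcv p hp v
        rcases GraverAux.gvec_cases p v with ⟨_, hg⟩ | ⟨_, hg⟩
        · rcases (hA p hp).2 with h1 | h1 <;> rw [h1] at hg
          · have hlt : ¬(xstar v - x v ≤ 0) := fun hh => by have := hc.2 hh; omega
            omega
          · have hlt : ¬(0 ≤ xstar v - x v) := fun hh => by have := hc.1 hh; omega
            omega
        · omega
      obtain ⟨N, S', ε', α', xs', h0', hlast', hconn', hsgn', hα', hstep', hJ', hfeas'⟩ :=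
        ih L' x' hlen' hA'' hsum'' hcv'' hce'' hbd''
      refine ⟨N + 1, Fin.cons p.1 S', Fin.cons p.2 ε', Fin.cons 1 α', Fin.cons x xs',
        ?_, ?_, ?_, ?_, ?_, ?_, ?_, ?_⟩
      · exact Fin.cons_zero _ _
      · rw [← Fin.succ_last, Fin.cons_succ]; exact hlast'
      · intro j
        refine Fin.cases ?_ ?_ j
        · rw [Fin.cons_zero]; exact (hA p hp).1
        · intro i; rw [Fin.cons_succ]; exact hconn' i
      · intro j
        refine Fin.cases ?_ ?_ j
        · rw [Fin.cons_zero]; exact (hA p hp).2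
        · intro i; rw [Fin.cons_succ]; exact hsgn' i
      · intro j
        refine Fin.cases ?_ ?_ j
        · rw [Fin.cons_zero]; norm_num
        · intro i; rw [Fin.cons_succ]; exact hα' i
      · intro j
        refine Fin.cases ?_ ?_ j
        · simp only [Fin.cons_succ, Fin.castSucc_zero, Fin.cons_zero]
          rw [h0']
          funext v
          have hxv : x' v = x v + GraverAux.gvec p v := rfl
          simp only [Pi.add_apply, Pi.smul_apply, smul_eq_mul, hxv, one_mul,
            GraverAux.gvec]
        · intro i
          simp only [← Fin.succ_castSucc, Fin.cons_succ]
          exact hstep' i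
      · intro j
        refine Fin.cases ?_ ?_ j
        · simp only [Fin.cons_succ, Fin.castSucc_zero, Fin.cons_zero]
          rw [h0']
          exact hJp
        · intro i
          simp only [← Fin.succ_castSucc, Fin.cons_succ]
          exact hJ' i
      · intro k
        refine Fin.cases ?_ ?_ k
        · rw [Fin.cons_zero]; exact hxfeas
        · intro i; rw [Fin.cons_succ]; exact hfeas' i
  obtain ⟨L0, hA0, hsum0, hcv0, hce0⟩ := GraverAux.decomp E hloop
    (∑ v, (xstar v - x0 v).natAbs) (fun v => xstar v - x0 v) le_rfl
  exact build L0.length L0 x0 rfl hA0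
    (fun v => by have h := hsum0 v; omega)
    hcv0 hce0 (fun v => ⟨Or.inl le_rfl, Or.inl le_rfl⟩)
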